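/- Let f : ℝⁿ → [0,∞) be continuous at almost every point (with respect to Lebesgue measure). Then for all but countably many z > 0, the boundary of the superlevel set L_z⁺(f) = {x : f(x) ≥ z} has Lebesgue measure zero. In particular, ∂L_z⁺(f) has measure zero for almost every z ≥ 0. -/

import Mathlib

open MeasureTheory

lemma frontier_inter_null (n : ℕ) (f : (Fin n → ℝ) → ℝ) {z₁ z₂ : ℝ} (h : z₁ < z₂)
    {x : Fin n → ℝ} (hc : ContinuousAt f x)
    (h1 : x ∈ frontier {x | z₁ ≤ f x}) (h2 : x ∈ frontier {x | z₂ ≤ f x}) : False := by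
  have hub : f x ≤ z₁ := by
    have hx : x ∈ closure {x | ¬ z₁ ≤ f x} := by
      have := h1.2
      rw [show {x | ¬ z₁ ≤ f x} = {x | z₁ ≤ f x}ᶜ from rfl, closure_compl]
      exact this
    have hne : (nhdsWithin x {x | ¬ z₁ ≤ f x}).NeBot := mem_closure_iff_nhdsWithin_neBot.1 hx
    have : Filter.Tendsto f (nhdsWithin x {x | ¬ z₁ ≤ f x}) (nhds (f x)) :=
      hc.continuousWithinAt.tendsto
    exact le_of_tendsto this (Filter.eventually_inf_principal.2 (Filter.Eventually.of_forall
      fun y hy => le_of_not_ge hy))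
  have hlb : z₂ ≤ f x := by
    have hx : x ∈ closure {x | z₂ ≤ f x} := h2.1
    have hne : (nhdsWithin x {x | z₂ ≤ f x}).NeBot := mem_closure_iff_nhdsWithin_neBot.1 hx
    have : Filter.Tendsto f (nhdsWithin x {x | z₂ ≤ f x}) (nhds (f x)) :=
      hc.continuousWithinAt.tendsto
    exact ge_of_tendsto this (Filter.eventually_inf_principal.2 (Filter.Eventually.of_forall
      fun y hy => hy))
  linarith

/-- If `f : ℝⁿ → [0,∞)` is continuous almost everywhere, then for all but countably many
`z > 0` the boundary of the superlevel set `{x : f x ≥ z}` is Lebesgue-null; in particular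
this holds for almost every `z ≥ 0`. -/
theorem stmt_14 (n : ℕ) (f : (Fin n → ℝ) → ℝ) (hf0 : 0 ≤ f)
    (hf : ∀ᵐ x : Fin n → ℝ ∂volume, ContinuousAt f x) :
    {z : ℝ | 0 < z ∧ volume (frontier {x | z ≤ f x}) ≠ 0}.Countable ∧
    ∀ᵐ z ∂(volume.restrict (Set.Ici (0 : ℝ))), volume (frontier {x | z ≤ f x}) = 0 := by
  set As : ℝ → Set (Fin n → ℝ) := fun z => frontier {x | z ≤ f x} with hAs
  have hmble : ∀ z, MeasurableSet (As z) := fun z =>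
    isClosed_frontier.measurableSet
  have hdisj : Pairwise (Function.onFun (AEDisjoint volume) As) := by
    intro z₁ z₂ hne
    refine measure_mono_null ?_ hf
    intro x hx
    simp only [Set.mem_inter_iff] at hx
    simp only [Set.mem_setOf_eq, Set.mem_compl_iff]
    intro hc
    rcases hne.lt_or_gt with h | h
    · exact frontier_inter_null n f h hc hx.1 hx.2
    · exact frontier_inter_null n f h hc hx.2 hx.1
  have hcnt : Set.Countable {z : ℝ | 0 < volume (As z)} :=
    Measure.countable_meas_pos_of_disjoint_iUnion₀
      (fun z => (hmble z).nullMeasurableSet) hdisj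
  constructor
  · exact hcnt.mono fun z hz => pos_iff_ne_zero.2 hz.2
  · have : {z : ℝ | volume (frontier {x | z ≤ f x}) ≠ 0} ⊆ {z : ℝ | 0 < volume (As z)} :=
      fun z hz => pos_iff_ne_zero.2 hz
    have hnull : volume {z : ℝ | volume (frontier {x | z ≤ f x}) ≠ 0} = 0 :=
      measure_mono_null this (hcnt.measure_zero volume)
    rw [ae_restrict_iff' measurableSet_Ici, ae_iff]
    refine measure_mono_null ?_ hnull
    intro z hz
    simp only [Set.mem_setOf_eq] at hz ⊢
    push_neg at hz
    exact hz.2
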